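/- In the distributed error-feedback compression scheme with true parameter x_{t+1} = x_t - (α/p)Σᵢ G̃(v_t^i) and shared view v_{t+1} = v_t - (1/p)Σᵢ Q(αG̃(v_t^i) + ε_t^i), starting from x_0 = v_0 = 0 and ε_0^i = 0, one has v_t - x_t = (1/p)Σ_{i=1}^p ε_t^i for all t; consequently, if the compressor satisfies ‖Q(w)-w‖² ≤ γ‖w‖² with 0 ≤ γ < 1 and E[‖G̃‖²] ≤ M², then E[‖x_t - v_t‖²] ≤ (2-γ)γM²α²/(1-γ)³. -/

import Mathlib

open MeasureTheory

set_option maxHeartbeats 1600000 in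
/-- distributed error-feedback compression.  With true parameter
`x_{t+1} = x_t - (α/p)Σᵢ G_t^i`, shared view `v_{t+1} = v_t - (1/p)Σᵢ Q(αG_t^i + ε_t^i)`,
error accumulators `ε_{t+1}^i = (αG_t^i + ε_t^i) - Q(αG_t^i + ε_t^i)`, and zero initial
conditions, one has `v_t - x_t = (1/p)Σᵢ ε_t^i` for all `t`; consequently, if `Q` is a
`γ`-compressor (`0 ≤ γ < 1`) and `E‖G_t^i‖² ≤ M²`, then
`E‖x_t - v_t‖² ≤ (2-γ)γM²α²/(1-γ)³`. -/
theorem stmt17 {d p : ℕ} (hp : 0 < p) {Ω : Type*} [MeasurableSpace Ω]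
    (μ : Measure Ω) [IsProbabilityMeasure μ]
    (γ α M : ℝ) (hγ0 : 0 ≤ γ) (hγ1 : γ < 1) (hM : 0 ≤ M)
    (Q : EuclideanSpace ℝ (Fin d) → EuclideanSpace ℝ (Fin d))
    (hQ : ∀ w, ‖Q w - w‖ ^ 2 ≤ γ * ‖w‖ ^ 2)
    (G : ℕ → Fin p → Ω → EuclideanSpace ℝ (Fin d))
    (hG : ∀ t i, ∫ ω, ‖G t i ω‖ ^ 2 ∂μ ≤ M ^ 2)
    (hGint : ∀ t i, Integrable (fun ω => ‖G t i ω‖ ^ 2) μ)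
    (x v : ℕ → Ω → EuclideanSpace ℝ (Fin d))
    (ε : ℕ → Fin p → Ω → EuclideanSpace ℝ (Fin d))
    (hεint : ∀ t i, Integrable (fun ω => ‖ε t i ω‖ ^ 2) μ)
    (hx0 : ∀ ω, x 0 ω = 0) (hv0 : ∀ ω, v 0 ω = 0) (hε0 : ∀ i ω, ε 0 i ω = 0)
    (hxrec : ∀ t ω, x (t + 1) ω = x t ω - (α / p) • ∑ i : Fin p, G t i ω)
    (hvrec : ∀ t ω,
      v (t + 1) ω = v t ω - ((1 : ℝ) / p) • ∑ i : Fin p, Q (α • G t i ω + ε t i ω))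
    (hεrec : ∀ t i ω,
      ε (t + 1) i ω = (α • G t i ω + ε t i ω) - Q (α • G t i ω + ε t i ω)) :
    (∀ t ω, v t ω - x t ω = ((1 : ℝ) / p) • ∑ i : Fin p, ε t i ω)
    ∧ ∀ t, ∫ ω, ‖x t ω - v t ω‖ ^ 2 ∂μ
        ≤ (2 - γ) * γ * M ^ 2 * α ^ 2 / (1 - γ) ^ 3 := by
  
  have hp' : (0:ℝ) < p := by exact_mod_cast hp
  have h1γ : (0:ℝ) < 1 - γ := by linarith
  -- Part 1: identity v_t - x_t = (1/p) Σ ε_t^i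
  have hid : ∀ t ω, v t ω - x t ω = ((1 : ℝ) / p) • ∑ i : Fin p, ε t i ω := by
    intro t
    induction t with
    | zero => intro ω; simp [hx0, hv0, hε0]
    | succ t ih =>
      intro ω
      have hεs : ∑ i : Fin p, ε (t + 1) i ω
          = α • (∑ i : Fin p, G t i ω) + (∑ i : Fin p, ε t i ω)
            - ∑ i : Fin p, Q (α • G t i ω + ε t i ω) := by
        simp only [hεrec, Finset.sum_sub_distrib, Finset.sum_add_distrib, Finset.smul_sum]
      rw [hvrec, hxrec, hεs]
      have := ih ω
      rw [smul_sub, smul_add, ← this, smul_smul]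
      have hα : (1:ℝ) / p * α = α / p := by ring
      rw [hα]
      abel
  refine ⟨hid, ?_⟩
  -- constant C
  set C : ℝ := (2 - γ) * M ^ 2 * α ^ 2 * γ / (1 - γ) ^ 3 with hC
  have h2γ : (0:ℝ) ≤ 2 - γ := by linarith
  have hCnn : 0 ≤ C :=
    div_nonneg (mul_nonneg (mul_nonneg (mul_nonneg h2γ (sq_nonneg M)) (sq_nonneg α)) hγ0)
      (pow_nonneg h1γ.le 3)
  -- pointwise key inequality
  have key : ∀ t i ω, ‖ε (t + 1) i ω‖ ^ 2
      ≤ γ * (2 - γ) * ‖ε t i ω‖ ^ 2 + (γ * (2 - γ) / (1 - γ)) * α ^ 2 * ‖G t i ω‖ ^ 2 := by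
    intro t i ω
    have hQ' := hQ (α • G t i ω + ε t i ω)
    have hw : ‖α • G t i ω + ε t i ω‖ ≤ |α| * ‖G t i ω‖ + ‖ε t i ω‖ := by
      calc ‖α • G t i ω + ε t i ω‖ ≤ ‖α • G t i ω‖ + ‖ε t i ω‖ := norm_add_le _ _
        _ = |α| * ‖G t i ω‖ + ‖ε t i ω‖ := by rw [norm_smul, Real.norm_eq_abs]
    rw [hεrec, norm_sub_rev]
    set a := |α| * ‖G t i ω‖ with ha
    set b := ‖ε t i ω‖ with hb
    have ha2 : a ^ 2 = α ^ 2 * ‖G t i ω‖ ^ 2 := by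
      rw [ha, mul_pow, sq_abs]
    have hwn : (0:ℝ) ≤ ‖α • G t i ω + ε t i ω‖ := norm_nonneg _
    have h1 : ‖α • G t i ω + ε t i ω‖ ^ 2 ≤ (a + b) ^ 2 := by nlinarith
    have hDa : γ * (2 - γ) / (1 - γ) * α ^ 2 * ‖G t i ω‖ ^ 2 * (1 - γ)
        = γ * (2 - γ) * a ^ 2 := by
      rw [ha2]; field_simp
    have han : 0 ≤ a := by positivity
    have hbn : 0 ≤ b := norm_nonneg _
    have hγw : γ * ‖α • G t i ω + ε t i ω‖ ^ 2 ≤ γ * (a + b) ^ 2 :=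
      mul_le_mul_of_nonneg_left h1 hγ0
    have hmain : γ * (a + b) ^ 2 * (1 - γ)
        ≤ (γ * (2 - γ) * b ^ 2 + γ * (2 - γ) / (1 - γ) * α ^ 2 * ‖G t i ω‖ ^ 2) * (1 - γ) := by
      nlinarith [mul_nonneg hγ0 (sq_nonneg (a - (1 - γ) * b)), hDa]
    have hfin := (mul_le_mul_iff_of_pos_right h1γ).mp hmain
    linarith
  -- integral bound on errors
  have hB : ∀ t i, ∫ ω, ‖ε t i ω‖ ^ 2 ∂μ ≤ C := by
    intro t
    induction t with
    | zero =>
      intro i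
      have : (fun ω => ‖ε 0 i ω‖ ^ 2) = fun _ => (0:ℝ) := by
        funext ω; rw [hε0, norm_zero]; ring
      rw [this, integral_zero]
      exact hCnn
    | succ t ih =>
      intro i
      have hint : Integrable (fun ω => γ * (2 - γ) * ‖ε t i ω‖ ^ 2
          + (γ * (2 - γ) / (1 - γ)) * α ^ 2 * ‖G t i ω‖ ^ 2) μ := by
        exact ((hεint t i).const_mul _).add
          ((hGint t i).const_mul (γ * (2 - γ) / (1 - γ) * α ^ 2))
      have h1 : ∫ ω, ‖ε (t + 1) i ω‖ ^ 2 ∂μ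
          ≤ ∫ ω, (γ * (2 - γ) * ‖ε t i ω‖ ^ 2
              + (γ * (2 - γ) / (1 - γ)) * α ^ 2 * ‖G t i ω‖ ^ 2) ∂μ := by
        refine integral_mono_of_nonneg ?_ hint ?_
        · filter_upwards with ω; positivity
        · filter_upwards with ω; exact key t i ω
      have h2 : ∫ ω, (γ * (2 - γ) * ‖ε t i ω‖ ^ 2
              + (γ * (2 - γ) / (1 - γ)) * α ^ 2 * ‖G t i ω‖ ^ 2) ∂μ
          = γ * (2 - γ) * ∫ ω, ‖ε t i ω‖ ^ 2 ∂μ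
            + (γ * (2 - γ) / (1 - γ)) * α ^ 2 * ∫ ω, ‖G t i ω‖ ^ 2 ∂μ := by
        rw [integral_add ((hεint t i).const_mul _)
            ((hGint t i).const_mul (γ * (2 - γ) / (1 - γ) * α ^ 2)),
          integral_const_mul, integral_const_mul]
      have hcoef2 : 0 ≤ γ * (2 - γ) := mul_nonneg hγ0 h2γ
      have hcoef : 0 ≤ γ * (2 - γ) / (1 - γ) * α ^ 2 :=
        mul_nonneg (div_nonneg hcoef2 h1γ.le) (sq_nonneg α)
      have h3 : γ * (2 - γ) * ∫ ω, ‖ε t i ω‖ ^ 2 ∂μ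
            + (γ * (2 - γ) / (1 - γ)) * α ^ 2 * ∫ ω, ‖G t i ω‖ ^ 2 ∂μ
          ≤ γ * (2 - γ) * C + (γ * (2 - γ) / (1 - γ)) * α ^ 2 * M ^ 2 := by
        have := mul_le_mul_of_nonneg_left (ih i) hcoef2
        have := mul_le_mul_of_nonneg_left (hG t i) hcoef
        linarith
      have hne : (1 - γ) ≠ 0 := ne_of_gt h1γ
      have h4 : γ * (2 - γ) * C + (γ * (2 - γ) / (1 - γ)) * α ^ 2 * M ^ 2 ≤ C := by
        have : γ * (2 - γ) * C + (γ * (2 - γ) / (1 - γ)) * α ^ 2 * M ^ 2 = C := by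
          rw [hC]; field_simp; ring
        linarith [this.le]
      linarith
  -- final bound
  intro t
  have hfinal : (2 - γ) * γ * M ^ 2 * α ^ 2 / (1 - γ) ^ 3 = C := by rw [hC]; ring
  rw [hfinal]
  have hptw : ∀ ω, ‖x t ω - v t ω‖ ^ 2 ≤ ((1:ℝ) / p) * ∑ i : Fin p, ‖ε t i ω‖ ^ 2 := by
    intro ω
    have h1 : ‖x t ω - v t ω‖ = ‖((1 : ℝ) / p) • ∑ i : Fin p, ε t i ω‖ := by
      rw [← hid t ω, norm_sub_rev]
    have h2 : ‖∑ i : Fin p, ε t i ω‖ ≤ ∑ i : Fin p, ‖ε t i ω‖ := norm_sum_le _ _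
    have h3 : (∑ i : Fin p, ‖ε t i ω‖) ^ 2 ≤ (p : ℝ) * ∑ i : Fin p, ‖ε t i ω‖ ^ 2 := by
      have := sq_sum_le_card_mul_sum_sq (s := (Finset.univ : Finset (Fin p)))
        (f := fun i => ‖ε t i ω‖)
      simpa using this
    rw [h1, norm_smul]
    have hns : 0 ≤ ‖∑ i : Fin p, ε t i ω‖ := norm_nonneg _
    have hsn : 0 ≤ ∑ i : Fin p, ‖ε t i ω‖ := Finset.sum_nonneg fun i _ => norm_nonneg _
    have h4 : ‖∑ i : Fin p, ε t i ω‖ ^ 2 ≤ (p : ℝ) * ∑ i : Fin p, ‖ε t i ω‖ ^ 2 := by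
      nlinarith
    rw [mul_pow, Real.norm_eq_abs]
    have : |(1:ℝ)/p| = 1/p := abs_of_pos (by positivity)
    rw [this]
    rw [show ((1:ℝ)/p)^2 = (1/p) * (1/p) by ring, mul_assoc]
    refine mul_le_mul_of_nonneg_left ?_ (by positivity)
    calc (1/(p:ℝ)) * ‖∑ i : Fin p, ε t i ω‖ ^ 2
        ≤ (1/(p:ℝ)) * ((p:ℝ) * ∑ i : Fin p, ‖ε t i ω‖ ^ 2) :=
          mul_le_mul_of_nonneg_left h4 (by positivity)
      _ = ∑ i : Fin p, ‖ε t i ω‖ ^ 2 := by field_simp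
  have hint : Integrable (fun ω => ((1:ℝ) / p) * ∑ i : Fin p, ‖ε t i ω‖ ^ 2) μ := by
    exact (integrable_finset_sum _ fun i _ => hεint t i).const_mul _
  have h5 : ∫ ω, ‖x t ω - v t ω‖ ^ 2 ∂μ
      ≤ ∫ ω, ((1:ℝ) / p) * ∑ i : Fin p, ‖ε t i ω‖ ^ 2 ∂μ := by
    refine integral_mono_of_nonneg ?_ hint ?_
    · filter_upwards with ω; positivity
    · filter_upwards with ω; exact hptw ω
  have h6 : ∫ ω, ((1:ℝ) / p) * ∑ i : Fin p, ‖ε t i ω‖ ^ 2 ∂μ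
      = ((1:ℝ) / p) * ∑ i : Fin p, ∫ ω, ‖ε t i ω‖ ^ 2 ∂μ := by
    rw [integral_const_mul, integral_finset_sum _ fun i _ => hεint t i]
  have h7 : ((1:ℝ) / p) * ∑ i : Fin p, ∫ ω, ‖ε t i ω‖ ^ 2 ∂μ ≤ ((1:ℝ) / p) * ((p:ℝ) * C) := by
    refine mul_le_mul_of_nonneg_left ?_ (by positivity)
    calc (∑ i : Fin p, ∫ ω, ‖ε t i ω‖ ^ 2 ∂μ) ≤ ∑ _i : Fin p, C :=
        Finset.sum_le_sum fun i _ => hB t i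
      _ = (p:ℝ) * C := by simp [mul_comm]
  have h8 : ((1:ℝ) / p) * ((p:ℝ) * C) = C := by field_simp
  linarith
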